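/- In an arbitrage-free discrete-time market, the super-hedging price E_t(H) := essinf { H_t ∈ L^0(F_t) : ∃ predictable ξ with H_t + G_t(ξ) ≥ H } defines, for each t, a sensitive sublinear F_t-conditional expectation on L^∞(P); in particular −‖H‖_∞ ≤ E_t(H) ≤ ‖H‖_∞ for H ∈ L^∞(P). -/

import Mathlib

open MeasureTheory

variable {Ω : Type*}

/-- A self-financing trading strategy: `ξ k` (the position held over `(k-1, k]`) is
`F_{k-1}`-measurable. -/
def Predictable {m : MeasurableSpace Ω} {d : ℕ} (F : Filtration ℕ m)
    (ξ : ℕ → Ω → Fin d → ℝ) : Prop :=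
  ∀ k : ℕ, 1 ≤ k → Measurable[F (k - 1)] (ξ k)

/-- Gains from trading with strategy `ξ` in `X` from time `t` to time `T`:
`G_t(ξ) = ∑_{k=t+1}^T ξ_k · (X_k - X_{k-1})`. -/
def Gains {d : ℕ} (X ξ : ℕ → Ω → Fin d → ℝ) (t T : ℕ) (ω : Ω) : ℝ :=
  ∑ k ∈ Finset.Icc (t + 1) T, ∑ i, ξ k ω i * (X k ω i - X (k - 1) ω i)

/-- `Q` is an equivalent martingale measure for the price process `X` on `{0,…,T}`:
`Q` is a probability measure equivalent to `P` under which each component of `X` is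
integrable and a martingale. -/
def IsEMM {m : MeasurableSpace Ω} {d : ℕ} (P Q : Measure Ω) (F : Filtration ℕ m)
    (X : ℕ → Ω → Fin d → ℝ) (T : ℕ) : Prop :=
  IsProbabilityMeasure Q ∧ (∀ A : Set Ω, P A = 0 ↔ Q A = 0) ∧
    (∀ t, t ≤ T → ∀ i, Integrable (fun ω => X t ω i) Q) ∧
    (∀ t, t < T → ∀ i,
      (Q[(fun ω => X (t + 1) ω i)|F t]) =ᵐ[Q] fun ω => X t ω i)

/-- The set of super-hedging prices at time `t` for the claim `H`. -/
def SuperPrices {m : MeasurableSpace Ω} {d : ℕ} (P : Measure Ω)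
    (F : Filtration ℕ m) (X : ℕ → Ω → Fin d → ℝ) (T t : ℕ) (H : Ω → ℝ) :
    Set (Ω → ℝ) :=
  {g | Measurable[F t] g ∧ ∃ ξ, Predictable F ξ ∧
    ∀ᵐ ω ∂P, H ω ≤ g ω + Gains X ξ t T ω}

/-- The set of sub-hedging prices at time `t` for the claim `H`. -/
def SubPrices {m : MeasurableSpace Ω} {d : ℕ} (P : Measure Ω)
    (F : Filtration ℕ m) (X : ℕ → Ω → Fin d → ℝ) (T t : ℕ) (H : Ω → ℝ) :
    Set (Ω → ℝ) :=
  {g | Measurable[F t] g ∧ ∃ ξ, Predictable F ξ ∧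
    ∀ᵐ ω ∂P, g ω + Gains X ξ t T ω ≤ H ω}

/-- The set of conditional expectations `E_Q[H | F_t]` over `Q ∈ M_e`. -/
def MPrices {m : MeasurableSpace Ω} {d : ℕ} (P : Measure Ω)
    (F : Filtration ℕ m) (X : ℕ → Ω → Fin d → ℝ) (T t : ℕ) (H : Ω → ℝ) :
    Set (Ω → ℝ) :=
  {f | ∃ Q : Measure Ω, IsEMM P Q F X T ∧ f = Q[H|F t]}

/-- `g` is a `P`-a.e. upper bound of the family `S`. -/
def IsAEUpperBound {_m : MeasurableSpace Ω} (P : Measure Ω)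
    (S : Set (Ω → ℝ)) (g : Ω → ℝ) : Prop :=
  ∀ f ∈ S, f ≤ᵐ[P] g

/-- `g` is a `P`-a.e. lower bound of the family `S`. -/
def IsAELowerBound {_m : MeasurableSpace Ω} (P : Measure Ω)
    (S : Set (Ω → ℝ)) (g : Ω → ℝ) : Prop :=
  ∀ f ∈ S, g ≤ᵐ[P] f

/-- `g` is (a version of) the essential supremum of the family `S` under `P`. -/
def IsEssSupOf {_m : MeasurableSpace Ω} (P : Measure Ω)
    (S : Set (Ω → ℝ)) (g : Ω → ℝ) : Prop :=
  IsAEUpperBound P S g ∧ ∀ h, IsAEUpperBound P S h → g ≤ᵐ[P] h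

/-- `g` is (a version of) the essential infimum of the family `S` under `P`. -/
def IsEssInfOf {_m : MeasurableSpace Ω} (P : Measure Ω)
    (S : Set (Ω → ℝ)) (g : Ω → ℝ) : Prop :=
  IsAELowerBound P S g ∧ ∀ h, IsAELowerBound P S h → h ≤ᵐ[P] g

/-- In an arbitrage-free market, the smallest super-hedging price
`E_t(H) = essinf SuperPrices` defines a sensitive sublinear `F_t`-conditional
expectation on `L^∞(P)`: it is bounded by `±‖H‖_∞`, monotone, preserves
`F_t`-measurable claims, is subadditive and positively homogeneous with respect to
nonnegative bounded `F_t`-measurable multipliers, and is sensitive. -/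
-- ae filter equality from null-set equivalence
lemma ae_eq_ae_of_iff {_m : MeasurableSpace Ω} {P Q : Measure Ω}
    (h : ∀ A : Set Ω, P A = 0 ↔ Q A = 0) : ae P = ae Q :=
  Filter.ext fun s => by simp only [mem_ae_iff, h]

lemma gains_self {d : ℕ} (X ξ : ℕ → Ω → Fin d → ℝ) (t : ℕ) :
    Gains X ξ t t = fun _ => 0 := by
  funext ω; simp [Gains, Finset.Icc_eq_empty (by omega : ¬ t + 1 ≤ t)]

lemma gains_succ {d : ℕ} (X ξ : ℕ → Ω → Fin d → ℝ) {t s : ℕ} (h : t ≤ s) (ω : Ω) :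
    Gains X ξ t (s + 1) ω =
      Gains X ξ t s ω + ∑ i, ξ (s + 1) ω i * (X (s + 1) ω i - X s ω i) := by
  unfold Gains
  rw [Finset.sum_Icc_succ_top (by omega : t + 1 ≤ s + 1)]
  simp

lemma gains_zero {d : ℕ} (X : ℕ → Ω → Fin d → ℝ) (t T : ℕ) :
    Gains X (fun _ _ _ => 0) t T = fun _ => 0 := by
  funext ω; simp [Gains]

lemma gains_add {d : ℕ} (X ξ ξ' : ℕ → Ω → Fin d → ℝ) (t T : ℕ) (ω : Ω) :
    Gains X (fun k ω i => ξ k ω i + ξ' k ω i) t T ω =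
      Gains X ξ t T ω + Gains X ξ' t T ω := by
  unfold Gains
  rw [← Finset.sum_add_distrib]
  refine Finset.sum_congr rfl fun k _ => ?_
  rw [← Finset.sum_add_distrib]
  refine Finset.sum_congr rfl fun i _ => ?_
  ring

lemma gains_smul {d : ℕ} (X ξ : ℕ → Ω → Fin d → ℝ) (c : Ω → ℝ) (t T : ℕ) (ω : Ω) :
    Gains X (fun k ω i => if t + 1 ≤ k then c ω * ξ k ω i else 0) t T ω =
      c ω * Gains X ξ t T ω := by
  unfold Gains
  rw [Finset.mul_sum]
  refine Finset.sum_congr rfl fun k hk => ?_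
  rw [Finset.mul_sum]
  refine Finset.sum_congr rfl fun i _ => ?_
  simp only [if_pos (Finset.mem_Icc.mp hk).1]
  ring

lemma predictable_smul {m : MeasurableSpace Ω} {d : ℕ} {F : Filtration ℕ m}
    {ξ : ℕ → Ω → Fin d → ℝ} (hξ : Predictable F ξ) {c : Ω → ℝ} {t : ℕ}
    (hc : Measurable[F t] c) :
    Predictable F (fun k ω i => if t + 1 ≤ k then c ω * ξ k ω i else 0) := by
  intro k hk
  letI : MeasurableSpace Ω := F (k - 1)
  refine measurable_pi_lambda _ fun i => ?_
  by_cases h : t + 1 ≤ k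
  · simp only [if_pos h]
    exact ((hc.mono (F.mono (by omega : t ≤ k - 1)) le_rfl)).mul
      ((measurable_pi_apply i).comp (hξ k hk))
  · simp only [if_neg h]; exact measurable_const

lemma predictable_add {m : MeasurableSpace Ω} {d : ℕ} {F : Filtration ℕ m}
    {ξ ξ' : ℕ → Ω → Fin d → ℝ} (hξ : Predictable F ξ) (hξ' : Predictable F ξ') :
    Predictable F (fun k ω i => ξ k ω i + ξ' k ω i) := by
  intro k hk
  letI : MeasurableSpace Ω := F (k - 1)
  refine measurable_pi_lambda _ fun i => ?_
  exact ((measurable_pi_apply i).comp (hξ k hk)).add ((measurable_pi_apply i).comp (hξ' k hk))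

lemma gains_measurable {m : MeasurableSpace Ω} {d : ℕ} {F : Filtration ℕ m}
    {X ξ : ℕ → Ω → Fin d → ℝ} (hX : ∀ t, Measurable[F t] (X t))
    (hξ : Predictable F ξ) (t s : ℕ) :
    Measurable[F s] (Gains X ξ t s) := by
  unfold Gains
  refine Finset.measurable_sum _ fun k hk => ?_
  obtain ⟨hk1, hk2⟩ := Finset.mem_Icc.mp hk
  refine Finset.measurable_sum _ fun i _ => ?_
  have hξk : Measurable[F s] fun ω => ξ k ω i :=
    ((measurable_pi_apply i).comp (hξ k (by omega))).mono (F.mono (by omega)) le_rfl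
  have hXk : Measurable[F s] fun ω => X k ω i :=
    ((measurable_pi_apply i).comp (hX k)).mono (F.mono (by omega)) le_rfl
  have hXk1 : Measurable[F s] fun ω => X (k-1) ω i :=
    ((measurable_pi_apply i).comp (hX (k-1))).mono (F.mono (by omega)) le_rfl
  exact hξk.mul (hXk.sub hXk1)

lemma integrable_of_ae_bound {m : MeasurableSpace Ω} {Q : Measure Ω}
    [IsProbabilityMeasure Q] {H : Ω → ℝ} {C : ℝ}
    (hH : AEStronglyMeasurable H Q) (hC : ∀ᵐ ω ∂Q, |H ω| ≤ C) :
    Integrable H Q :=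
  by
  refine (integrable_const C).mono' hH ?_
  filter_upwards [hC] with ω h
  simpa [Real.norm_eq_abs] using h

-- key duality lemma
lemma condexp_le_superhedge {m : MeasurableSpace Ω} {d : ℕ} {F : Filtration ℕ m}
    {Q : Measure Ω} [IsProbabilityMeasure Q]
    {X : ℕ → Ω → Fin d → ℝ} (hX : ∀ t, Measurable[F t] (X t))
    {T : ℕ} (hFT : (F T : MeasurableSpace Ω) = m)
    (hInt : ∀ t, t ≤ T → ∀ i, Integrable (fun ω => X t ω i) Q)
    (hMart : ∀ t, t < T → ∀ i,
      (Q[(fun ω => X (t + 1) ω i)|F t]) =ᵐ[Q] fun ω => X t ω i)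
    {t : ℕ} (ht : t ≤ T) {H : Ω → ℝ} (hH : Measurable H) {C : ℝ}
    (hC : ∀ᵐ ω ∂Q, |H ω| ≤ C) {f : Ω → ℝ} {ξ : ℕ → Ω → Fin d → ℝ}
    (hf : Measurable[F t] f) (hξ : Predictable F ξ)
    (hge : ∀ᵐ ω ∂Q, H ω ≤ f ω + Gains X ξ t T ω) :
    Q[H|F t] ≤ᵐ[Q] f := by
  have hHint : Integrable H Q :=
    integrable_of_ae_bound (hH.aestronglyMeasurable) hC
  have hTop : Q[H|F T] = H := by
    refine condExp_of_stronglyMeasurable (F.le T) ?_ hHint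
    rw [hFT]; exact hH.stronglyMeasurable
  -- downward induction claim
  have main : ∀ n s, t ≤ s → s ≤ T → T ≤ s + n →
      Q[H|F s] ≤ᵐ[Q] fun ω => f ω + Gains X ξ t s ω := by
    intro n
    induction n with
    | zero =>
      intro s hts hsT hTs
      have hsT' : s = T := by omega
      rw [hsT', hTop]
      exact hge
    | succ n ih =>
      intro s hts hsT hTs
      rcases eq_or_lt_of_le hsT with hEq | hlt
      · rw [hEq, hTop]; exact hge
      · -- s < T, use ih at s+1
        have hstep := ih (s + 1) (by omega) (by omega) (by omega)
        have hms : (F s : MeasurableSpace Ω) ≤ m := F.le s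
        have hms1 : (F (s+1) : MeasurableSpace Ω) ≤ m := F.le (s+1)
        set W : Ω → ℝ := Q[H|F (s+1)] with hWdef
        set Y : Ω → ℝ := fun ω => f ω + Gains X ξ t s ω with hYdef
        have hYm : Measurable[F s] Y :=
          (hf.mono (F.mono hts) le_rfl).add (gains_measurable hX hξ t s)
        have hξm : Measurable[F s] (ξ (s+1)) := by
          have := hξ (s+1) (by omega)
          simpa using this
        have hξmi : ∀ i, Measurable[F s] fun ω => ξ (s+1) ω i := fun i =>
          (measurable_pi_apply i).comp hξm
        have hΔint : ∀ i : Fin d, Integrable (fun ω => X (s+1) ω i - X s ω i) Q :=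
          fun i => (hInt (s+1) (by omega) i).sub (hInt s (by omega) i)
        have hΔ0 : ∀ i : Fin d,
            Q[fun ω => X (s+1) ω i - X s ω i|F s] =ᵐ[Q] fun _ => (0:ℝ) := by
          intro i
          have h1 := condExp_sub (μ := Q) (m := F s) (hInt (s+1) (by omega) i)
            (hInt s (by omega) i)
          have h2 := hMart s (by omega) i
          have h3 : Q[fun ω => X s ω i|F s] = fun ω => X s ω i :=
            condExp_of_stronglyMeasurable hms
              ((measurable_pi_apply i).comp (hX s)).stronglyMeasurable
              (hInt s (by omega) i)
          have h4 : (fun ω => X (s+1) ω i - X s ω i) =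
              (fun ω => X (s+1) ω i) - (fun ω => X s ω i) := rfl
          rw [h4]
          filter_upwards [h1, h2] with ω e1 e2
          simp only [Pi.sub_apply] at e1 ⊢
          rw [e1, h3, e2]
          simp
        -- localization sets
        set B : ℕ → Set Ω := fun n =>
          {ω | |Y ω| ≤ n ∧ ∀ i, |ξ (s+1) ω i| ≤ n} with hBdef
        have hBmeas : ∀ n : ℕ, MeasurableSet[F s] (B n) := by
          intro n
          letI : MeasurableSpace Ω := F s
          have h1 : MeasurableSet[F s] {ω | |Y ω| ≤ (n:ℝ)} :=
            measurableSet_le hYm.abs measurable_const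
          have h2 : MeasurableSet[F s] {ω | ∀ i, |ξ (s+1) ω i| ≤ (n:ℝ)} := by
            have he : {ω | ∀ i, |ξ (s+1) ω i| ≤ (n:ℝ)} =
                ⋂ i, {ω | |ξ (s+1) ω i| ≤ (n:ℝ)} := by ext ω; simp [Set.mem_iInter]
            rw [he]
            exact MeasurableSet.iInter fun i =>
              measurableSet_le (hξmi i).abs measurable_const
          exact h1.inter h2
        have hWYD : ∀ᵐ ω ∂Q, W ω ≤ Y ω + ∑ i, ξ (s+1) ω i * (X (s+1) ω i - X s ω i) := by
          filter_upwards [hstep] with ω hω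
          calc W ω ≤ f ω + Gains X ξ t (s+1) ω := hω
          _ = Y ω + ∑ i, ξ (s+1) ω i * (X (s+1) ω i - X s ω i) := by
            rw [gains_succ X ξ hts ω, hYdef]; ring
        -- per-n conditional inequality
        have hloc : ∀ n : ℕ, ∀ᵐ ω ∂Q, ω ∈ B n → (Q[H|F s]) ω ≤ Y ω := by
          intro n
          set χ : Ω → ℝ := (B n).indicator (fun _ => 1) with hχdef
          have hχm : StronglyMeasurable[F s] χ :=
            stronglyMeasurable_const.indicator (hBmeas n)
          have hχ01 : ∀ ω, χ ω = 0 ∨ χ ω = 1 := by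
            intro ω; by_cases h : ω ∈ B n <;> simp [hχdef, h]
          have hχnn : ∀ ω, 0 ≤ χ ω := by
            intro ω; rcases hχ01 ω with h | h <;> simp [h]
          have hχbd : ∀ᵐ ω ∂Q, ‖χ ω‖ ≤ (1:ℝ) := by
            refine Filter.Eventually.of_forall fun ω => ?_
            rcases hχ01 ω with h | h <;> simp [h]
          have hWint : Integrable W Q := integrable_condExp
          have hχW : Integrable (χ * W) Q :=
            hWint.bdd_mul ((hχm.mono hms).aestronglyMeasurable) hχbd
          have hχY : Integrable (χ * Y) Q := by
            refine integrable_of_ae_bound (C := (n:ℝ))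
              (((hχm.mul hYm.stronglyMeasurable).mono hms).aestronglyMeasurable) ?_
            refine Filter.Eventually.of_forall fun ω => ?_
            by_cases h : ω ∈ B n
            · simp only [Pi.mul_apply, hχdef, Set.indicator_of_mem h, one_mul]
              exact h.1
            · simp only [Pi.mul_apply, hχdef, Set.indicator_of_notMem h, zero_mul, abs_zero]
              positivity
          have hχξbd : ∀ i : Fin d, ∀ᵐ ω ∂Q, ‖χ ω * ξ (s+1) ω i‖ ≤ (n:ℝ) := by
            intro i
            refine Filter.Eventually.of_forall fun ω => ?_
            by_cases h : ω ∈ B n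
            · simp only [hχdef, Set.indicator_of_mem h, one_mul, Real.norm_eq_abs]
              exact h.2 i
            · simp only [hχdef, Set.indicator_of_notMem h, zero_mul, norm_zero]
              positivity
          have hχξm : ∀ i : Fin d, StronglyMeasurable[F s] fun ω => χ ω * ξ (s+1) ω i :=
            fun i => hχm.mul (hξmi i).stronglyMeasurable
          have hχD : ∀ i : Fin d,
              Integrable (fun ω => χ ω * ξ (s+1) ω i * (X (s+1) ω i - X s ω i)) Q := by
            intro i
            exact (hΔint i).bdd_mul (((hχξm i).mono hms).aestronglyMeasurable) (hχξbd i)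
          have hDint : Integrable
              (fun ω => ∑ i, χ ω * ξ (s+1) ω i * (X (s+1) ω i - X s ω i)) Q :=
            integrable_finset_sum _ fun i _ => hχD i
          have hRHSint : Integrable
              (fun ω => χ ω * Y ω + ∑ i, χ ω * ξ (s+1) ω i * (X (s+1) ω i - X s ω i)) Q :=
            hχY.add hDint
          have hineq : (χ * W) ≤ᵐ[Q]
              fun ω => χ ω * Y ω + ∑ i, χ ω * ξ (s+1) ω i * (X (s+1) ω i - X s ω i) := by
            filter_upwards [hWYD] with ω hω
            have := mul_le_mul_of_nonneg_left hω (hχnn ω)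
            simp only [Pi.mul_apply]
            calc χ ω * W ω ≤ χ ω * (Y ω + ∑ i, ξ (s+1) ω i * (X (s+1) ω i - X s ω i)) := this
            _ = χ ω * Y ω + ∑ i, χ ω * ξ (s+1) ω i * (X (s+1) ω i - X s ω i) := by
              rw [mul_add, Finset.mul_sum]
              congr 1
              exact Finset.sum_congr rfl fun i _ => by ring
          -- conditional expectations
          have hmono := condExp_mono (m := F s) hχW hRHSint hineq
          have hLHS : Q[χ * W|F s] =ᵐ[Q] χ * Q[W|F s] :=
            condExp_stronglyMeasurable_mul_of_bound hms hχm hWint 1 hχbd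
          have hRHS1 : Q[fun ω => χ ω * Y ω + ∑ i, χ ω * ξ (s+1) ω i * (X (s+1) ω i - X s ω i)|F s]
              =ᵐ[Q] Q[χ * Y|F s] + Q[fun ω => ∑ i, χ ω * ξ (s+1) ω i * (X (s+1) ω i - X s ω i)|F s] := by
            have h4 : (fun ω => χ ω * Y ω + ∑ i, χ ω * ξ (s+1) ω i * (X (s+1) ω i - X s ω i)) =
                (χ * Y) + (fun ω => ∑ i, χ ω * ξ (s+1) ω i * (X (s+1) ω i - X s ω i)) := rfl
            rw [h4]
            exact condExp_add hχY hDint (F s)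
          have hRHS2 : Q[χ * Y|F s] = χ * Y :=
            condExp_of_stronglyMeasurable hms (hχm.mul hYm.stronglyMeasurable) hχY
          have hRHS3 : Q[fun ω => ∑ i, χ ω * ξ (s+1) ω i * (X (s+1) ω i - X s ω i)|F s]
              =ᵐ[Q] fun _ => (0:ℝ) := by
            have hsum : Q[fun ω => ∑ i, χ ω * ξ (s+1) ω i * (X (s+1) ω i - X s ω i)|F s]
                =ᵐ[Q] ∑ i, Q[fun ω => χ ω * ξ (s+1) ω i * (X (s+1) ω i - X s ω i)|F s] := by
              have h5 : (fun ω => ∑ i, χ ω * ξ (s+1) ω i * (X (s+1) ω i - X s ω i)) =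
                  ∑ i, (fun ω => χ ω * ξ (s+1) ω i * (X (s+1) ω i - X s ω i)) := by
                funext ω; simp
              rw [h5]
              exact condExp_finset_sum (fun i _ => hχD i) (F s)
            refine hsum.trans ?_
            have hterm : ∀ i : Fin d,
                Q[fun ω => χ ω * ξ (s+1) ω i * (X (s+1) ω i - X s ω i)|F s]
                  =ᵐ[Q] fun _ => (0:ℝ) := by
              intro i
              have h6 : (fun ω => χ ω * ξ (s+1) ω i * (X (s+1) ω i - X s ω i)) =
                  (fun ω => χ ω * ξ (s+1) ω i) * (fun ω => X (s+1) ω i - X s ω i) := rfl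
              rw [h6]
              have := condExp_stronglyMeasurable_mul_of_bound hms (hχξm i) (hΔint i)
                (n:ℝ) (hχξbd i)
              refine this.trans ?_
              filter_upwards [hΔ0 i] with ω hω
              simp only [Pi.mul_apply, hω, mul_zero]
            have hterms := ae_all_iff.mpr fun i : Fin d => hterm i
            filter_upwards [hterms] with ω hω
            rw [Finset.sum_apply]
            exact Finset.sum_eq_zero fun i _ => hω i
          have hTower : Q[W|F s] =ᵐ[Q] Q[H|F s] :=
            condExp_condExp_of_le (F.mono (by omega : s ≤ s+1)) hms1
          filter_upwards [hmono, hLHS, hRHS1, hRHS3, hTower] with ω e1 e2 e3 e4 e5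
          intro hωB
          have hχ1 : χ ω = 1 := by
            simp [hχdef, Set.indicator_of_mem hωB]
          have h9 : (Q[H|F s]) ω = (Q[χ * W|F s]) ω := by
            rw [e2, Pi.mul_apply, hχ1, one_mul, e5]
          rw [h9]
          refine e1.trans ?_
          rw [e3, Pi.add_apply, e4, hRHS2, Pi.mul_apply, hχ1, one_mul, add_zero]
        -- combine over n
        have hAll : ∀ᵐ ω ∂Q, ∀ n : ℕ, ω ∈ B n → (Q[H|F s]) ω ≤ Y ω :=
          ae_all_iff.mpr hloc
        filter_upwards [hAll] with ω hω
        obtain ⟨n, hn⟩ := exists_nat_ge (|Y ω| + ∑ i, |ξ (s+1) ω i|)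
        have hsumnn : (0:ℝ) ≤ ∑ i, |ξ (s+1) ω i| :=
          Finset.sum_nonneg fun i _ => abs_nonneg _
        have hmem : ω ∈ B n := by
          simp only [hBdef, Set.mem_setOf_eq]
          constructor
          · linarith
          · intro i
            have h7 : |ξ (s+1) ω i| ≤ ∑ j, |ξ (s+1) ω j| :=
              Finset.single_le_sum (f := fun j => |ξ (s+1) ω j|)
                (fun j _ => abs_nonneg _) (Finset.mem_univ i)
            have h8 : (0:ℝ) ≤ |Y ω| := abs_nonneg _
            linarith
        exact hω n hmem
  have hfin := main (T - t) t le_rfl ht (by omega)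
  filter_upwards [hfin] with ω hω
  simpa [gains_self X ξ t] using hω

section Membership
variable {m : MeasurableSpace Ω} {d : ℕ} {F : Filtration ℕ m} {P : Measure Ω}
  {X : ℕ → Ω → Fin d → ℝ} {T t : ℕ} {H H' : Ω → ℝ}

lemma mem_const {c : ℝ} (hc : ∀ᵐ ω ∂P, H ω ≤ c) :
    (fun _ => c) ∈ SuperPrices P F X T t H := by
  refine ⟨measurable_const, fun _ _ _ => 0, fun k _ => measurable_const, ?_⟩
  filter_upwards [hc] with ω hω
  simpa [gains_zero X t T] using hω

lemma mem_self (hH : Measurable[F t] H) : H ∈ SuperPrices P F X T t H := by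
  refine ⟨hH, fun _ _ _ => 0, fun k _ => measurable_const, ?_⟩
  refine Filter.Eventually.of_forall fun ω => ?_
  simp [gains_zero X t T]

lemma superPrices_antitone (hle : H ≤ᵐ[P] H') :
    SuperPrices P F X T t H' ⊆ SuperPrices P F X T t H := by
  rintro f ⟨hfm, ξ, hξ, hge⟩
  exact ⟨hfm, ξ, hξ, by filter_upwards [hge, hle] with ω h1 h2 using h2.trans h1⟩

lemma mem_add {f f' : Ω → ℝ} (hf : f ∈ SuperPrices P F X T t H)
    (hf' : f' ∈ SuperPrices P F X T t H') :
    f + f' ∈ SuperPrices P F X T t (H + H') := by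
  obtain ⟨hfm, ξ, hξ, hge⟩ := hf
  obtain ⟨hfm', ξ', hξ', hge'⟩ := hf'
  refine ⟨hfm.add hfm', fun k ω i => ξ k ω i + ξ' k ω i, predictable_add hξ hξ', ?_⟩
  filter_upwards [hge, hge'] with ω h1 h2
  rw [gains_add X ξ ξ' t T ω]
  simp only [Pi.add_apply]
  linarith

lemma mem_smul {f lam : Ω → ℝ} (hlam : Measurable[F t] lam) (hlam0 : 0 ≤ lam)
    (hf : f ∈ SuperPrices P F X T t H) :
    lam * f ∈ SuperPrices P F X T t (lam * H) := by
  obtain ⟨hfm, ξ, hξ, hge⟩ := hf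
  refine ⟨hlam.mul hfm, fun k ω i => if t + 1 ≤ k then lam ω * ξ k ω i else 0,
    predictable_smul hξ hlam, ?_⟩
  filter_upwards [hge] with ω h1
  rw [gains_smul X ξ lam t T ω]
  simp only [Pi.mul_apply]
  calc lam ω * H ω ≤ lam ω * (f ω + Gains X ξ t T ω) :=
    mul_le_mul_of_nonneg_left h1 (hlam0 ω)
  _ = lam ω * f ω + lam ω * Gains X ξ t T ω := by ring

end Membership

lemma mem_div {m : MeasurableSpace Ω} {d : ℕ} {F : Filtration ℕ m} {P : Measure Ω}
    {X : ℕ → Ω → Fin d → ℝ} {T t : ℕ} {H : Ω → ℝ} {C : ℝ}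
    {f' lam : Ω → ℝ} (hlam : Measurable[F t] lam) (hlam0 : 0 ≤ lam)
    (hC : ∀ᵐ ω ∂P, |H ω| ≤ C)
    (hf' : f' ∈ SuperPrices P F X T t (lam * H)) :
    (fun ω => if 0 < lam ω then (lam ω)⁻¹ * f' ω else C) ∈ SuperPrices P F X T t H := by
  obtain ⟨hfm', ξ', hξ', hge'⟩ := hf'
  set c : Ω → ℝ := fun ω => if 0 < lam ω then (lam ω)⁻¹ else 0 with hcdef
  have hset : MeasurableSet[F t] {ω | 0 < lam ω} := by
    letI : MeasurableSpace Ω := F t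
    exact measurableSet_lt measurable_const hlam
  have hc : Measurable[F t] c := by
    letI : MeasurableSpace Ω := F t
    exact Measurable.ite hset hlam.inv measurable_const
  have hfdiv : Measurable[F t] fun ω => if 0 < lam ω then (lam ω)⁻¹ * f' ω else C := by
    letI : MeasurableSpace Ω := F t
    exact Measurable.ite hset (hlam.inv.mul hfm') measurable_const
  refine ⟨hfdiv, fun k ω i => if t + 1 ≤ k then c ω * ξ' k ω i else 0,
    predictable_smul hξ' hc, ?_⟩
  filter_upwards [hge', hC] with ω h1 h2
  rw [gains_smul X ξ' c t T ω]
  simp only [Pi.mul_apply] at h1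
  by_cases hpos : 0 < lam ω
  · simp only [if_pos hpos, hcdef]
    have h3 : (lam ω)⁻¹ * (lam ω * H ω) ≤ (lam ω)⁻¹ * (f' ω + Gains X ξ' t T ω) :=
      mul_le_mul_of_nonneg_left h1 (inv_nonneg.2 hpos.le)
    rw [← mul_assoc, inv_mul_cancel₀ hpos.ne', one_mul, mul_add] at h3
    linarith
  · have h0 : lam ω = 0 := le_antisymm (not_lt.mp hpos) (hlam0 ω)
    simp only [if_neg hpos, hcdef, h0]
    simp only [lt_self_iff_false, if_false, zero_mul, add_zero]
    exact (abs_le.mp h2).2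

theorem superhedging_price_is_sensitive_sublinear_expectation
    {m : MeasurableSpace Ω} {d T : ℕ} (F : Filtration ℕ m)
    (P : Measure Ω) [IsProbabilityMeasure P]
    (X : ℕ → Ω → Fin d → ℝ) (hX : ∀ t, Measurable[F t] (X t))
    (hFT : (F T : MeasurableSpace Ω) = m)
    (hNA : ∃ Q : Measure Ω, IsEMM P Q F X T)
    (t : ℕ) (ht : t ≤ T) :
    -- bounds: -‖H‖_∞ ≤ E_t(H) ≤ ‖H‖_∞
    (∀ (H : Ω → ℝ) (C : ℝ), Measurable H → (∀ᵐ ω ∂P, |H ω| ≤ C) →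
      ∀ g, IsEssInfOf P (SuperPrices P F X T t H) g →
        ∀ᵐ ω ∂P, -C ≤ g ω ∧ g ω ≤ C) ∧
    -- monotonicity
    (∀ (H H' : Ω → ℝ) (C : ℝ), Measurable H → Measurable H' →
      (∀ᵐ ω ∂P, |H ω| ≤ C) → (∀ᵐ ω ∂P, |H' ω| ≤ C) → H ≤ᵐ[P] H' →
      ∀ g g', IsEssInfOf P (SuperPrices P F X T t H) g →
        IsEssInfOf P (SuperPrices P F X T t H') g' → g ≤ᵐ[P] g') ∧
    -- preservation of F_t-measurable claims
    (∀ (H : Ω → ℝ) (C : ℝ), Measurable[F t] H → (∀ᵐ ω ∂P, |H ω| ≤ C) →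
      ∀ g, IsEssInfOf P (SuperPrices P F X T t H) g → g =ᵐ[P] H) ∧
    -- subadditivity
    (∀ (H H' : Ω → ℝ) (C : ℝ), Measurable H → Measurable H' →
      (∀ᵐ ω ∂P, |H ω| ≤ C) → (∀ᵐ ω ∂P, |H' ω| ≤ C) →
      ∀ g g' g'', IsEssInfOf P (SuperPrices P F X T t H) g →
        IsEssInfOf P (SuperPrices P F X T t H') g' →
        IsEssInfOf P (SuperPrices P F X T t (H + H')) g'' →
        g'' ≤ᵐ[P] g + g') ∧
    -- positive homogeneity w.r.t. nonnegative bounded F_t-measurable multipliers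
    (∀ (H lam : Ω → ℝ) (C : ℝ), Measurable H → (∀ᵐ ω ∂P, |H ω| ≤ C) →
      Measurable[F t] lam → (0 ≤ lam) → (∀ᵐ ω ∂P, |lam ω| ≤ C) →
      ∀ g g', IsEssInfOf P (SuperPrices P F X T t H) g →
        IsEssInfOf P (SuperPrices P F X T t (lam * H)) g' →
        g' =ᵐ[P] lam * g) ∧
    -- sensitivity
    (∀ (H : Ω → ℝ) (C : ℝ), Measurable H → (∀ᵐ ω ∂P, |H ω| ≤ C) →
      (0 ≤ᵐ[P] H) → ∀ g, IsEssInfOf P (SuperPrices P F X T t H) g →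
        g =ᵐ[P] (0 : Ω → ℝ) → H =ᵐ[P] (0 : Ω → ℝ)) := by
  obtain ⟨Q, hQP, hEqv, hQInt, hQMart⟩ := hNA
  haveI : IsProbabilityMeasure Q := hQP
  have hae : ae P = ae Q := ae_eq_ae_of_iff hEqv
  have hmt : (F t : MeasurableSpace Ω) ≤ m := F.le t
  -- duality lower bound
  have hLB : ∀ (G : Ω → ℝ) (Cg : ℝ), Measurable G → (∀ᵐ ω ∂P, |G ω| ≤ Cg) →
      ∀ f ∈ SuperPrices P F X T t G, Q[G|F t] ≤ᵐ[P] f := by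
    intro G Cg hG hCg f hf
    obtain ⟨hfm, ξ, hξ, hge⟩ := hf
    rw [hae] at hCg hge ⊢
    exact condexp_le_superhedge hX hFT hQInt hQMart ht hG hCg hfm hξ hge
  -- bounds on the conditional expectation
  have hBnd : ∀ (G : Ω → ℝ) (Cg : ℝ), Measurable G → (∀ᵐ ω ∂P, |G ω| ≤ Cg) →
      ∀ᵐ ω ∂P, -Cg ≤ (Q[G|F t]) ω ∧ (Q[G|F t]) ω ≤ Cg := by
    intro G Cg hG hCg
    rw [hae] at hCg ⊢
    have hGint : Integrable G Q := integrable_of_ae_bound hG.aestronglyMeasurable hCg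
    have h1 := condExp_mono (μ := Q) (m := F t) (integrable_const (-Cg)) hGint
      (by filter_upwards [hCg] with ω h using (abs_le.mp h).1)
    have h2 := condExp_mono (μ := Q) (m := F t) hGint (integrable_const Cg)
      (by filter_upwards [hCg] with ω h using (abs_le.mp h).2)
    rw [condExp_const hmt] at h1 h2
    filter_upwards [h1, h2] with ω e1 e2
    exact ⟨e1, e2⟩
  -- per-claim lower bound by -C
  have hlow : ∀ (G : Ω → ℝ) (Cg : ℝ), Measurable G → (∀ᵐ ω ∂P, |G ω| ≤ Cg) →
      ∀ f ∈ SuperPrices P F X T t G, (fun _ => -Cg) ≤ᵐ[P] f := by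
    intro G Cg hG hCg f hf
    filter_upwards [hLB G Cg hG hCg f hf, hBnd G Cg hG hCg] with ω e1 e2
    exact le_trans e2.1 e1
  refine ⟨?_, ?_, ?_, ?_, ?_, ?_⟩
  · -- bounds
    intro H C hH hC g hg
    have h1 : g ≤ᵐ[P] fun _ => C :=
      hg.1 _ (mem_const (by filter_upwards [hC] with ω h using (abs_le.mp h).2))
    have h2 : (fun _ => -C) ≤ᵐ[P] g := hg.2 _ (hlow H C hH hC)
    filter_upwards [h1, h2] with ω e1 e2
    exact ⟨e2, e1⟩
  · -- monotone
    intro H H' C hH hH' hC hC' hle g g' hg hg'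
    exact hg'.2 g fun f hf => hg.1 f (superPrices_antitone hle hf)
  · -- preservation
    intro H C hHt hC g hg
    have hHm : Measurable H := hHt.mono hmt le_rfl
    have h1 : g ≤ᵐ[P] H := hg.1 H (mem_self hHt)
    have h2 : H ≤ᵐ[P] g := by
      refine hg.2 H fun f hf => ?_
      have hCQ := hC
      rw [hae] at hCQ
      have hEQ : Q[H|F t] = H := condExp_of_stronglyMeasurable hmt
        hHt.stronglyMeasurable (integrable_of_ae_bound hHm.aestronglyMeasurable hCQ)
      have := hLB H C hHm hC f hf
      rwa [hEQ] at this
    exact h1.antisymm h2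
  · -- subadditivity
    intro H H' C hH hH' hC hC' g g' g'' hg hg' hg''
    have k2 : ∀ f' ∈ SuperPrices P F X T t H', (g'' - f') ≤ᵐ[P] g := by
      intro f' hf'
      refine hg.2 _ fun f hf => ?_
      have := hg''.1 _ (mem_add hf hf')
      filter_upwards [this] with ω h
      simp only [Pi.sub_apply, Pi.add_apply] at h ⊢
      linarith
    have k3 : IsAELowerBound P (SuperPrices P F X T t H') (g'' - g) := by
      intro f' hf'
      filter_upwards [k2 f' hf'] with ω h
      simp only [Pi.sub_apply] at h ⊢
      linarith
    have k4 := hg'.2 _ k3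
    filter_upwards [k4] with ω h
    simp only [Pi.sub_apply] at h
    simp only [Pi.add_apply]
    linarith
  · -- positive homogeneity
    intro H lam C hH hC hlam hlam0 hlamC g g' hg hg'
    have hlamm : Measurable lam := hlam.mono hmt le_rfl
    have hC0 : (0:ℝ) ≤ C := by
      have : (ae P).NeBot := ae_neBot.2 (IsProbabilityMeasure.ne_zero P)
      obtain ⟨ω, hω⟩ := hC.exists
      linarith [abs_nonneg (H ω)]
    have hlamH : Measurable (lam * H) := hlamm.mul hH
    have hlamHC : ∀ᵐ ω ∂P, |(lam * H) ω| ≤ C * C := by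
      filter_upwards [hC, hlamC] with ω h1 h2
      simp only [Pi.mul_apply, abs_mul]
      exact mul_le_mul h2 h1 (abs_nonneg _) hC0
    -- direction A : g' ≤ lam * g
    have hA1 : ∀ f ∈ SuperPrices P F X T t H, g' ≤ᵐ[P] lam * f :=
      fun f hf => hg'.1 _ (mem_smul hlam hlam0 hf)
    have hA2 : IsAELowerBound P (SuperPrices P F X T t H)
        (fun ω => if 0 < lam ω then (lam ω)⁻¹ * g' ω else -C) := by
      intro f hf
      filter_upwards [hA1 f hf, hlow H C hH hC f hf] with ω e1 e2
      by_cases hpos : 0 < lam ω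
      · simp only [if_pos hpos]
        simp only [Pi.mul_apply] at e1
        calc (lam ω)⁻¹ * g' ω ≤ (lam ω)⁻¹ * (lam ω * f ω) :=
          mul_le_mul_of_nonneg_left e1 (inv_nonneg.2 hpos.le)
        _ = f ω := by field_simp
      · simp only [if_neg hpos]
        exact e2
    have hA3 := hg.2 _ hA2
    have hA4 : g' ≤ᵐ[P] lam * (fun _ => C) :=
      hA1 _ (mem_const (by filter_upwards [hC] with ω h using (abs_le.mp h).2))
    have hA : g' ≤ᵐ[P] lam * g := by
      filter_upwards [hA3, hA4] with ω e3 e4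
      simp only [Pi.mul_apply] at e4 ⊢
      by_cases hpos : 0 < lam ω
      · simp only [if_pos hpos] at e3
        calc g' ω = lam ω * ((lam ω)⁻¹ * g' ω) := by field_simp
        _ ≤ lam ω * g ω := mul_le_mul_of_nonneg_left e3 hpos.le
      · have h0 : lam ω = 0 := le_antisymm (not_lt.mp hpos) (hlam0 ω)
        rw [h0] at e4 ⊢
        simpa using e4
    -- direction B : lam * g ≤ g'
    have hlamCQ := hlamC
    rw [hae] at hlamCQ
    have hCQ := hC
    rw [hae] at hCQ
    have hHintQ : Integrable H Q := integrable_of_ae_bound hH.aestronglyMeasurable hCQ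
    have e7 : Q[lam * H|F t] =ᵐ[P] lam * Q[H|F t] := by
      rw [hae]
      refine condExp_stronglyMeasurable_mul_of_bound hmt hlam.stronglyMeasurable hHintQ C ?_
      filter_upwards [hlamCQ] with ω h
      simpa [Real.norm_eq_abs] using h
    have hB1 : IsAELowerBound P (SuperPrices P F X T t (lam * H)) (lam * g) := by
      intro f' hf'
      have e5 := hg.1 _ (mem_div hlam hlam0 hC hf')
      have e6 := hLB (lam * H) (C * C) hlamH hlamHC f' hf'
      filter_upwards [e5, e6, e7] with ω u5 u6 u7
      simp only [Pi.mul_apply] at u7 ⊢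
      by_cases hpos : 0 < lam ω
      · simp only [if_pos hpos] at u5
        calc lam ω * g ω ≤ lam ω * ((lam ω)⁻¹ * f' ω) :=
          mul_le_mul_of_nonneg_left u5 hpos.le
        _ = f' ω := by field_simp
      · have h0 : lam ω = 0 := le_antisymm (not_lt.mp hpos) (hlam0 ω)
        rw [h0, zero_mul]
        rw [u7, h0, zero_mul] at u6
        exact u6
    have hB := hg'.2 _ hB1
    exact hA.antisymm hB
  · -- sensitivity
    intro H C hH hC hH0 g hg hg0
    have hCQ := hC
    rw [hae] at hCQ
    have hH0Q := hH0
    rw [hae] at hH0Q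
    have hHintQ : Integrable H Q := integrable_of_ae_bound hH.aestronglyMeasurable hCQ
    have l2 : Q[H|F t] ≤ᵐ[P] g := hg.2 _ (fun f hf => hLB H C hH hC f hf)
    have l3 : Q[H|F t] ≤ᵐ[Q] fun _ => (0:ℝ) := by
      rw [← hae]
      filter_upwards [l2, hg0] with ω e1 e2
      simpa using e1.trans_eq e2
    have l4 : (fun _ => (0:ℝ)) ≤ᵐ[Q] Q[H|F t] := by
      have := condExp_mono (μ := Q) (m := F t) (integrable_const (0:ℝ)) hHintQ
        (by filter_upwards [hH0Q] with ω h using h)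
      rwa [condExp_const hmt] at this
    have l5 : Q[H|F t] =ᵐ[Q] fun _ => (0:ℝ) := l3.antisymm l4
    have l6 : ∫ ω, H ω ∂Q = 0 := by
      rw [← integral_condExp hmt, integral_congr_ae l5]
      simp
    have l7 : H =ᵐ[Q] fun _ => (0:ℝ) := by
      have := (integral_eq_zero_iff_of_nonneg_ae hH0Q hHintQ).mp l6
      exact this
    rw [hae]
    exact l7
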